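/- The near-critical mass on the triangular lattice converges to the modulus of the drift (Lemma 2.8 of the paper): Let c₁, c₂, c₃ ∈ ℝ and Δ = (c₁ + c₂·τ + c₃·τ²)/3 ∈ ℂ. Then lim_{δ → 0⁺} δ^{−2}·(1 − 3·((1 + c₁δ)(1 + c₂δ)(1 + c₃δ))^{1/3}/(3 + (c₁ + c₂ + c₃)·δ)) = |Δ|². Equivalently, the mass m = m(δ) ≥ 0 defined for small δ > 0 by (1/3)·(1 − m²δ²) = ((1 + c₁δ)(1 + c₂δ)(1 + c₃δ))^{1/3}/(3 + (c₁ + c₂ + c₃)δ) converges to |Δ| as δ → 0. -/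

import Mathlib

open Filter

/-- The primitive third root of unity `τ = e^{2πi/3}`. -/
noncomputable def triTau : ℂ := Complex.exp (2 * Real.pi * Complex.I / 3)

lemma triTau_re : triTau.re = -(1/2) := by
  have h : (2 * (Real.pi : ℂ) * Complex.I / 3) = ((2 * Real.pi / 3 : ℝ) : ℂ) * Complex.I := by
    push_cast; ring
  rw [triTau, h, Complex.exp_ofReal_mul_I_re]
  have h2 : (2 * Real.pi / 3) = Real.pi - Real.pi / 3 := by ring
  rw [h2, Real.cos_pi_sub, Real.cos_pi_div_three]

lemma triTau_im : triTau.im = Real.sqrt 3 / 2 := by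
  have h : (2 * (Real.pi : ℂ) * Complex.I / 3) = ((2 * Real.pi / 3 : ℝ) : ℂ) * Complex.I := by
    push_cast; ring
  rw [triTau, h, Complex.exp_ofReal_mul_I_im]
  have h2 : (2 * Real.pi / 3) = Real.pi - Real.pi / 3 := by ring
  rw [h2, Real.sin_pi_sub, Real.sin_pi_div_three]

lemma abs_drift_sq (c₁ c₂ c₃ : ℝ) :
    ‖((c₁ : ℂ) + (c₂ : ℂ) * triTau + (c₃ : ℂ) * triTau ^ 2) / 3‖ ^ 2
      = (c₁ ^ 2 + c₂ ^ 2 + c₃ ^ 2 - c₁ * c₂ - c₂ * c₃ - c₁ * c₃) / 9 := by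
  rw [Complex.sq_norm, Complex.normSq_apply]
  have hs3 : Real.sqrt 3 ^ 2 = 3 := Real.sq_sqrt (by norm_num)
  simp only [Complex.div_re, Complex.div_im, Complex.add_re, Complex.add_im, Complex.mul_re,
    Complex.mul_im, Complex.ofReal_re, Complex.ofReal_im, pow_two, Complex.normSq_apply,
    triTau_re, triTau_im, Complex.re_ofNat, Complex.im_ofNat]
  norm_num
  linear_combination (-c₁*c₃/18 - c₂*c₃/36 + c₂^2/36 + c₃^2/72 +
    c₃^2*(Real.sqrt 3 ^2+3)/144) * hs3

/-- **The near-critical mass on the triangular lattice converges to the modulus of the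
drift** (Lemma 2.8): with `Δ = (c₁ + c₂τ + c₃τ²)/3`, one has
`δ⁻²·(1 - 3·((1+c₁δ)(1+c₂δ)(1+c₃δ))^{1/3}/(3 + (c₁+c₂+c₃)δ)) → |Δ|²` as `δ → 0⁺`;
equivalently the mass `m(δ)` defined by
`(1/3)(1 - m²δ²) = ((1+c₁δ)(1+c₂δ)(1+c₃δ))^{1/3}/(3 + (c₁+c₂+c₃)δ)` converges to `|Δ|`. -/
theorem mass_tendsto_abs_drift_triangular (c₁ c₂ c₃ : ℝ) :
    Tendsto
      (fun δ : ℝ => (δ ^ 2)⁻¹ *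
        (1 - 3 * ((1 + c₁ * δ) * (1 + c₂ * δ) * (1 + c₃ * δ)) ^ ((1 : ℝ) / 3)
              / (3 + (c₁ + c₂ + c₃) * δ)))
      (nhdsWithin 0 (Set.Ioi 0))
      (nhds (‖((c₁ : ℂ) + (c₂ : ℂ) * triTau + (c₃ : ℂ) * triTau ^ 2) / 3‖ ^ 2)) := by
  rw [abs_drift_sq]
  set K : ℝ := c₁ ^ 2 + c₂ ^ 2 + c₃ ^ 2 - c₁ * c₂ - c₂ * c₃ - c₁ * c₃ with hK
  set s : ℝ := c₁ + c₂ + c₃ with hs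
  set P : ℝ → ℝ := fun δ => (1 + c₁ * δ) * (1 + c₂ * δ) * (1 + c₃ * δ) with hP
  set q : ℝ → ℝ := fun δ => P δ ^ ((1 : ℝ) / 3) with hq
  set g : ℝ → ℝ := fun δ => (9 * K + (s ^ 3 - 27 * (c₁ * c₂ * c₃)) * δ) /
      ((3 + s * δ) * ((3 + s * δ) ^ 2 + 3 * (3 + s * δ) * q δ + 9 * q δ ^ 2)) with hg
  -- continuity facts
  have hPcont : ContinuousAt P 0 := by fun_prop
  have hqcont : ContinuousAt q 0 := hPcont.rpow_const (Or.inr (by norm_num))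
  have hq0 : q 0 = 1 := by simp [hq, hP]
  have hP0 : P 0 = 1 := by simp [hP]
  have hglim : Tendsto g (nhdsWithin 0 (Set.Ioi 0)) (nhds (K / 9)) := by
    have hgcont : ContinuousAt g 0 := by
      apply ContinuousAt.div
      · fun_prop
      · fun_prop
      · simp [hq0]; norm_num
    have hg0 : g 0 = K / 9 := by
      simp [hg, hq0]; ring
    rw [← hg0]
    exact hgcont.continuousWithinAt.tendsto
  refine hglim.congr' ?_
  -- eventual positivity
  have h1 : ∀ᶠ δ in nhdsWithin 0 (Set.Ioi 0), 0 < 1 + c₁ * δ := by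
    apply eventually_nhdsWithin_of_eventually_nhds
    have : ContinuousAt (fun δ : ℝ => 1 + c₁ * δ) 0 := by fun_prop
    simpa using this.eventually_const_lt (by norm_num : (0:ℝ) < 1 + c₁ * 0)
  have h2 : ∀ᶠ δ in nhdsWithin 0 (Set.Ioi 0), 0 < 1 + c₂ * δ := by
    apply eventually_nhdsWithin_of_eventually_nhds
    have : ContinuousAt (fun δ : ℝ => 1 + c₂ * δ) 0 := by fun_prop
    simpa using this.eventually_const_lt (by norm_num : (0:ℝ) < 1 + c₂ * 0)
  have h3 : ∀ᶠ δ in nhdsWithin 0 (Set.Ioi 0), 0 < 1 + c₃ * δ := by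
    apply eventually_nhdsWithin_of_eventually_nhds
    have : ContinuousAt (fun δ : ℝ => 1 + c₃ * δ) 0 := by fun_prop
    simpa using this.eventually_const_lt (by norm_num : (0:ℝ) < 1 + c₃ * 0)
  have hpos : ∀ᶠ δ : ℝ in nhdsWithin (0:ℝ) (Set.Ioi 0), 0 < δ :=
    eventually_mem_nhdsWithin
  filter_upwards [h1, h2, h3, hpos] with δ h1 h2 h3 hδ
  -- the algebraic identity
  have hPpos : 0 < P δ := by positivity
  have hqpos : 0 < q δ := Real.rpow_pos_of_pos hPpos _
  have ha : 0 < 3 + s * δ := by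
    have : 3 + s * δ = (1 + c₁ * δ) + (1 + c₂ * δ) + (1 + c₃ * δ) := by rw [hs]; ring
    linarith [h1, h2, h3]
  have hq3 : q δ ^ (3 : ℕ) = P δ := by
    rw [hq, ← Real.rpow_natCast (P δ ^ ((1:ℝ)/3)) 3, ← Real.rpow_mul hPpos.le]
    norm_num
  have hD : 0 < (3 + s * δ) ^ 2 + 3 * (3 + s * δ) * q δ + 9 * q δ ^ 2 := by positivity
  rw [hg]
  show (9 * K + (s ^ 3 - 27 * (c₁ * c₂ * c₃)) * δ) /
      ((3 + s * δ) * ((3 + s * δ) ^ 2 + 3 * (3 + s * δ) * q δ + 9 * q δ ^ 2))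
    = (δ ^ 2)⁻¹ * (1 - 3 * ((1 + c₁ * δ) * (1 + c₂ * δ) * (1 + c₃ * δ)) ^ ((1 : ℝ) / 3)
        / (3 + (c₁ + c₂ + c₃) * δ))
  have hqeq : ((1 + c₁ * δ) * (1 + c₂ * δ) * (1 + c₃ * δ)) ^ ((1 : ℝ) / 3) = q δ := rfl
  rw [hqeq, ← hs]
  have hδ2 : (δ : ℝ) ^ 2 ≠ 0 := by positivity
  have hnum : (3 + s * δ) ^ 3 - 27 * q δ ^ 3
      = δ ^ 2 * (9 * K + (s ^ 3 - 27 * (c₁ * c₂ * c₃)) * δ) := by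
    rw [hq3]
    simp only [hP]
    rw [hs, hK]
    ring
  have key : 1 - 3 * q δ / (3 + s * δ)
      = δ ^ 2 * (9 * K + (s ^ 3 - 27 * (c₁ * c₂ * c₃)) * δ) /
        ((3 + s * δ) * ((3 + s * δ) ^ 2 + 3 * (3 + s * δ) * q δ + 9 * q δ ^ 2)) := by
    rw [← hnum]
    field_simp
    ring
  rw [key]
  field_simp
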